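/- Let V be a finite vertex set and d ∈ ℝ^V with 0 < d_v ≤ 1 for every v. Let H = {v ∈ V : d_v = 1} and L = V \ H = {l_1,…,l_k} with k ≥ 1, and let V_1,…,V_k be a partition of H with |V_j| ≥ s for every j, where s ≥ 1. Let G_{HH} be the subgraph of the product demand graph of d consisting of all edges with both endpoints in H, and G_{LH} the subgraph of all edges between L and H. Then L_{G_{HH}} + L_{G_{LH}} ≈_{4/√s} L_{G_{HH}} + Σ_{j=1}^{k} (|H|/|V_j|)·Σ_{h∈V_j} d_{l_j}·d_h·L_{(l_j,h)}, where L_{(u,v)} = (e_u − e_v)(e_u − e_v)ᵀ is the Laplacian of the unit-weight edge {u,v}. -/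

import Mathlib

open Matrix BigOperators Finset
open scoped Classical

noncomputable section

/-- Loewner order: `PSDLE A B` means `A ⪯ B`, i.e. `B - A` is positive semidefinite. -/
def PSDLE {n : Type*} [Fintype n] (A B : Matrix n n ℝ) : Prop :=
  (B - A).PosSemidef

/-- `ApproxEps A ε B` means `A ≈_ε B`, i.e. `e^ε • B ⪰ A ⪰ e^{-ε} • B`. -/
def ApproxEps {n : Type*} [Fintype n] (A : Matrix n n ℝ) (ε : ℝ) (B : Matrix n n ℝ) : Prop :=
  PSDLE A (Real.exp ε • B) ∧ PSDLE (Real.exp (-ε) • B) A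

/-- `M` is α-strongly diagonally dominant:
`M_{ii} ≥ (1+α)·Σ_{j≠i} |M_{ij}|` for every `i`. -/
def IsStronglyDD {n : Type*} [Fintype n] [DecidableEq n] (α : ℝ) (M : Matrix n n ℝ) : Prop :=
  ∀ i, (1 + α) * ∑ j ∈ Finset.univ.erase i, |M i j| ≤ M i i

/-- A Laplacian matrix: symmetric, nonpositive off-diagonal entries, zero row sums. -/
def IsLaplacian {n : Type*} [Fintype n] (L : Matrix n n ℝ) : Prop :=
  L.IsSymm ∧ (∀ i j, i ≠ j → L i j ≤ 0) ∧ ∀ i, ∑ j, L i j = 0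

/-- An SDDM matrix: symmetric positive definite, nonpositive off-diagonal entries,
and each diagonal entry at least the sum of absolute values of the off-diagonal
entries in its row. -/
def IsSDDM {n : Type*} [Fintype n] [DecidableEq n] (M : Matrix n n ℝ) : Prop :=
  M.IsSymm ∧ M.PosDef ∧ (∀ i j, i ≠ j → M i j ≤ 0) ∧
    ∀ i, ∑ j ∈ Finset.univ.erase i, |M i j| ≤ M i i

/-- The vector `e_u - e_v`. -/
def eVec {ι : Type*} [DecidableEq ι] (u v : ι) : ι → ℝ :=
  fun a => (if a = u then 1 else 0) - (if a = v then 1 else 0)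

/-- The Laplacian of a single unit-weight edge `{u,v}`:
`(e_u - e_v)(e_u - e_v)ᵀ`. -/
def edgeL {ι : Type*} [DecidableEq ι] (u v : ι) : Matrix ι ι ℝ :=
  Matrix.vecMulVec (eVec u v) (eVec u v)

set_option linter.unusedSectionVars false
set_option linter.unusedVariables false

section Aux
variable {V : Type*} [Fintype V] [DecidableEq V]

lemma eVec_dot (u v : V) (x : V → ℝ) : eVec u v ⬝ᵥ x = x u - x v := by
  simp [eVec, dotProduct, sub_mul, Finset.sum_sub_distrib]

lemma quad_edgeL (u v : V) (x : V → ℝ) : x ⬝ᵥ edgeL u v *ᵥ x = (x u - x v)^2 := by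
  have h : edgeL u v *ᵥ x = (eVec u v ⬝ᵥ x) • eVec u v := by
    ext i
    simp [edgeL, Matrix.mulVec, Matrix.vecMulVec_apply, dotProduct, Finset.mul_sum, mul_comm,
      mul_left_comm]
  rw [h, dotProduct_smul, eVec_dot]
  have hx : x ⬝ᵥ eVec u v = x u - x v := by
    simp [eVec, dotProduct, mul_sub, Finset.sum_sub_distrib]
  rw [hx]; ring_nf

def qf (x : V → ℝ) : Matrix V V ℝ →ₗ[ℝ] ℝ where
  toFun M := x ⬝ᵥ M *ᵥ x
  map_add' A B := by simp [Matrix.add_mulVec, dotProduct_add]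
  map_smul' c A := by simp [Matrix.smul_mulVec, dotProduct_smul]

lemma qf_edgeL (x : V → ℝ) (u v : V) : (qf x) (edgeL u v) = (x u - x v)^2 :=
  quad_edgeL u v x

lemma isSymm_edgeL (u v : V) : (edgeL u v).IsSymm := by
  show _ = _
  ext i j
  simp [edgeL, Matrix.transpose_apply, Matrix.vecMulVec_apply, mul_comm]

lemma isSymm_sum {ι : Type*} (s : Finset ι) (f : ι → Matrix V V ℝ)
    (h : ∀ i ∈ s, (f i).IsSymm) : (∑ i ∈ s, f i).IsSymm := by
  show _ = _
  rw [Matrix.transpose_sum]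
  exact Finset.sum_congr rfl h

lemma isSymm_smul (c : ℝ) (M : Matrix V V ℝ) (h : M.IsSymm) : (c • M).IsSymm := by
  show _ = _
  rw [Matrix.transpose_smul, h]

lemma posSemidef_of_symm (M : Matrix V V ℝ) (hs : M.IsSymm) (h : ∀ x, 0 ≤ x ⬝ᵥ M *ᵥ x) :
    M.PosSemidef := by
  refine Matrix.PosSemidef.of_dotProduct_mulVec_nonneg ?_ fun x => by simpa using h x
  rw [Matrix.IsHermitian, Matrix.conjTranspose]
  ext i j; simpa using congrFun (congrFun hs i) j

lemma sum_sq_split (T : Finset V) (hT : T.Nonempty) (x : V → ℝ) (a : ℝ) :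
    ∑ h ∈ T, (a - x h)^2
      = T.card * (a - (∑ h ∈ T, x h)/T.card)^2
        + ∑ h ∈ T, (x h - (∑ h ∈ T, x h)/T.card)^2 := by
  have ht : (T.card : ℝ) ≠ 0 := by
    have := Finset.card_pos.mpr hT
    positivity
  set c : ℝ := (∑ h ∈ T, x h)/T.card with hc
  have hzero : ∑ h ∈ T, (c - x h) = 0 := by
    rw [Finset.sum_sub_distrib, Finset.sum_const, nsmul_eq_mul, hc]
    field_simp
    simp
  have step : ∀ h ∈ T, (a - x h)^2
      = (a - c)^2 + 2*(a-c)*(c - x h) + (x h - c)^2 := by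
    intro h _; ring
  rw [Finset.sum_congr rfl step, Finset.sum_add_distrib, Finset.sum_add_distrib,
    Finset.sum_const, ← Finset.mul_sum, hzero, nsmul_eq_mul]
  ring

lemma mean_sq_le (T : Finset V) (hT : T.Nonempty) (x : V → ℝ) (a : ℝ) :
    (T.card : ℝ) * ((∑ h ∈ T, x h)/T.card - a)^2 ≤ ∑ h ∈ T, (x h - a)^2 := by
  have h := sum_sq_split T hT x a
  have he : ∑ h ∈ T, (a - x h)^2 = ∑ h ∈ T, (x h - a)^2 := by
    apply Finset.sum_congr rfl; intro h _; ring
  have hnn : 0 ≤ ∑ h ∈ T, (x h - (∑ h ∈ T, x h)/T.card)^2 :=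
    Finset.sum_nonneg fun _ _ => sq_nonneg _
  nlinarith [sq_nonneg (a - (∑ h ∈ T, x h)/T.card)]

lemma var_le (T : Finset V) (hT : T.Nonempty) (x : V → ℝ) (a : ℝ) :
    ∑ h ∈ T, (x h - (∑ h ∈ T, x h)/T.card)^2 ≤ ∑ h ∈ T, (x h - a)^2 := by
  have h := sum_sq_split T hT x a
  have he : ∑ h ∈ T, (a - x h)^2 = ∑ h ∈ T, (x h - a)^2 := by
    apply Finset.sum_congr rfl; intro h _; ring
  nlinarith [mul_nonneg (Nat.cast_nonneg T.card : (0:ℝ) ≤ T.card)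
    (sq_nonneg (a - (∑ h ∈ T, x h)/T.card))]

lemma sq_add_le (δ : ℝ) (hδ : 0 < δ) (a b : ℝ) :
    (a + b)^2 ≤ (1+δ)*a^2 + (1+1/δ)*b^2 := by
  have h : (1+δ)*a^2 + (1+1/δ)*b^2 - (a+b)^2 = (δ*a - b)^2 / δ := by
    field_simp; ring
  nlinarith [sq_nonneg (δ*a - b), div_nonneg (sq_nonneg (δ*a-b)) hδ.le]

lemma core_ineq (m r u CH T1 T2 E W SD QA QB : ℝ)
    (hm : 0 ≤ m) (hr : 1 ≤ r) (hu0 : 0 < u) (hru : r * u = 1)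
    (hCH : 0 ≤ CH) (hT1 : 0 ≤ T1) (hT2 : 0 ≤ T2) (hE : 0 ≤ E) (hW : 0 ≤ W) (hSD : 0 ≤ SD)
    (hQA : QA = m*CH + m*T1 + SD*CH)
    (hQB : QB = m*CH + m*T2 + W)
    (hSDle : SD ≤ m*u*u) (hWle : W ≤ m*u*u*CH) (hEle : E ≤ CH*u*u)
    (h12 : T2 ≤ (1+u)*T1 + (1+r)*E)
    (h21 : T1 ≤ (1+u)*T2 + (1+r)*E) :
    QA ≤ Real.exp (4*u) * QB ∧ QB ≤ Real.exp (4*u) * QA := by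
  have hu1 : u ≤ 1 := by nlinarith
  have huu : u*u ≤ u := by nlinarith
  have hmC : (0:ℝ) ≤ m*CH := mul_nonneg hm hCH
  have hexp : 1 + 4*u ≤ Real.exp (4*u) := by
    have := Real.add_one_le_exp (4*u); linarith
  have hexp0 : (0:ℝ) < Real.exp (4*u) := Real.exp_pos _
  have hru2 : r*(u*u) = u := by rw [← mul_assoc, hru, one_mul]
  have hZW : W ≤ u*(m*CH) := by
    have h1 : m*u*u*CH ≤ u*(m*CH) := by
      have := mul_le_mul_of_nonneg_right huu hmC
      nlinarith
    linarith
  have hZS : SD*CH ≤ u*(m*CH) := by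
    have h := mul_le_mul_of_nonneg_right hSDle hCH
    have h1 : m*u*u*CH ≤ u*(m*CH) := by
      have := mul_le_mul_of_nonneg_right huu hmC
      nlinarith
    linarith
  have key : ∀ Ta Tb Z Wx : ℝ, 0 ≤ Ta → 0 ≤ Tb → 0 ≤ Z → Z ≤ u*(m*CH) → 0 ≤ Wx →
      Ta ≤ (1+u)*Tb + (1+r)*E →
      m*CH + m*Ta + Z ≤ Real.exp (4*u) * (m*CH + m*Tb + Wx) := by
    intro Ta Tb Z Wx hTa hTb hZ0 hZle hWx hab
    have hmT : 0 ≤ m*Tb := mul_nonneg hm hTb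
    have e1 : m*Ta ≤ m*Tb + u*(m*Tb) + m*((1+r)*E) := by
      calc m*Ta ≤ m*((1+u)*Tb + (1+r)*E) := mul_le_mul_of_nonneg_left hab hm
        _ = m*Tb + u*(m*Tb) + m*((1+r)*E) := by ring
    have e2 : m*((1+r)*E) ≤ 2*(u*(m*CH)) := by
      have h : m*((1+r)*E) ≤ m*((1+r)*(CH*(u*u))) := by
        apply mul_le_mul_of_nonneg_left _ hm
        exact mul_le_mul_of_nonneg_left (by linarith [hEle] : E ≤ CH*(u*u)) (by positivity)
      have h2 : m*((1+r)*(CH*(u*u))) = (u*u)*(m*CH) + (r*(u*u))*(m*CH) := by ring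
      have h3 : (u*u)*(m*CH) ≤ u*(m*CH) := mul_le_mul_of_nonneg_right huu hmC
      rw [h2, hru2] at h
      linarith
    have e4 : m*CH + m*Ta + Z ≤ (1+3*u)*(m*CH + m*Tb) := by
      have hR : (1+3*u)*(m*CH + m*Tb) = m*CH + m*Tb + 3*(u*(m*CH)) + 3*(u*(m*Tb)) := by ring
      have huY : 0 ≤ u*(m*Tb) := mul_nonneg hu0.le hmT
      linarith
    have e5 : (1+3*u)*(m*CH + m*Tb) ≤ Real.exp (4*u) * (m*CH + m*Tb) := by
      apply mul_le_mul_of_nonneg_right _ (by positivity)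
      linarith
    have e6 : Real.exp (4*u) * (m*CH + m*Tb) ≤ Real.exp (4*u) * (m*CH + m*Tb + Wx) := by
      apply mul_le_mul_of_nonneg_left _ hexp0.le
      linarith
    linarith
  constructor
  · rw [hQA, hQB]
    exact key T1 T2 (SD*CH) W hT1 hT2 (mul_nonneg hSD hCH) hZS hW h21
  · rw [hQA, hQB]
    have := key T2 T1 W (SD*CH) hT2 hT1 hW hZW (mul_nonneg hSD hCH) h12
    linarith

end Aux

/-- replacing the `L`–`H` edges by stars: for a product demand
graph with demands `0 < d_v ≤ 1`, `H = {v : d_v = 1}`, `L = V \ H` nonempty, and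
a partition `(P l)_{l ∈ L}` of `H` into parts of size at least `s ≥ 1`,
`L_{G_HH} + L_{G_LH} ≈_{4/√s}
  L_{G_HH} + Σ_{l∈L} (|H|/|P l|)·Σ_{h∈P l} d_l·d_h·L_(l,h)`. -/
theorem replace_LH_by_stars {V : Type*} [Fintype V] [DecidableEq V] (d : V → ℝ)
    (hd0 : ∀ v, 0 < d v) (hd1 : ∀ v, d v ≤ 1)
    (P : V → Finset V) (s : ℝ) (hs : 1 ≤ s) :
    let H := Finset.univ.filter fun v => d v = 1
    let L := Finset.univ.filter fun v => d v ≠ 1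
    1 ≤ L.card →
    (∀ l ∈ L, P l ⊆ H) →
    (∀ l ∈ L, ∀ l' ∈ L, l ≠ l' → Disjoint (P l) (P l')) →
    L.biUnion P = H →
    (∀ l ∈ L, s ≤ ((P l).card : ℝ)) →
    ApproxEps
      ((1 / 2 : ℝ) • (∑ u ∈ H, ∑ v ∈ H, (d u * d v) • edgeL u v) +
        ∑ l ∈ L, ∑ h ∈ H, (d l * d h) • edgeL l h)
      (4 / Real.sqrt s)
      ((1 / 2 : ℝ) • (∑ u ∈ H, ∑ v ∈ H, (d u * d v) • edgeL u v) +
        ∑ l ∈ L, ((H.card : ℝ) / ((P l).card : ℝ)) • ∑ h ∈ P l, (d l * d h) • edgeL l h) := by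
  intro H L hk hPH hdisj hcover hcards
  have hHdef : H = Finset.univ.filter (fun v => d v = 1) := rfl
  have hdH : ∀ h ∈ H, d h = 1 := by
    intro h hh; rw [hHdef] at hh; exact (Finset.mem_filter.mp hh).2
  have hs0 : (0:ℝ) < s := lt_of_lt_of_le one_pos hs
  set r := Real.sqrt s with hrdef
  have hr1 : 1 ≤ r := by
    rw [hrdef, show (1:ℝ) = Real.sqrt 1 by simp]
    exact Real.sqrt_le_sqrt hs
  have hr0 : (0:ℝ) < r := lt_of_lt_of_le one_pos hr1
  set u := 1/r with hudef
  have hu0 : (0:ℝ) < u := by positivity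
  have hru : r * u = 1 := by rw [hudef]; field_simp
  have hε : 4 / r = 4 * u := by rw [hudef]; ring
  have hrr : r * r = s := Real.mul_self_sqrt hs0.le
  have hsu : s * (u*u) = 1 := by
    rw [← hrr]
    calc r*r*(u*u) = (r*u)*(r*u) := by ring
      _ = 1 := by rw [hru]; ring
  have hdivs : ∀ a : ℝ, a / s = a * (u*u) := by
    intro a
    rw [div_eq_iff hs0.ne']
    calc a = a*(s*(u*u)) := by rw [hsu, mul_one]
      _ = a*(u*u)*s := by ring
  -- nonemptiness
  have hLne : L.Nonempty := Finset.card_pos.mp hk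
  have hPne : ∀ l ∈ L, (P l).Nonempty := by
    intro l hl
    have h1 : (0:ℝ) < (P l).card := lt_of_lt_of_le hs0 (hcards l hl)
    exact Finset.card_pos.mp (by exact_mod_cast h1)
  have hHne : H.Nonempty := by
    obtain ⟨l, hl⟩ := hLne
    obtain ⟨h, hh⟩ := hPne l hl
    exact ⟨h, hPH l hl hh⟩
  set m : ℝ := (H.card : ℝ) with hmdef
  have hm0 : (0:ℝ) < m := by
    rw [hmdef]; exact_mod_cast Finset.card_pos.mpr hHne
  have htl : ∀ l ∈ L, (0:ℝ) < ((P l).card:ℝ) := fun l hl => lt_of_lt_of_le hs0 (hcards l hl)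
  -- partition facts
  have hdisj' : (↑L : Set V).PairwiseDisjoint P := fun a ha b hb hab =>
    hdisj a (Finset.mem_coe.mp ha) b (Finset.mem_coe.mp hb) hab
  have hpart : ∀ f : V → ℝ, ∑ l ∈ L, ∑ h ∈ P l, f h = ∑ h ∈ H, f h := by
    intro f; rw [← hcover, Finset.sum_biUnion hdisj']
  have hcardsum : ∑ l ∈ L, ((P l).card : ℝ) = m := by
    rw [hmdef, ← hcover, Finset.card_biUnion hdisj]
    push_cast; rfl
  have hSD0 : (0:ℝ) ≤ ∑ l ∈ L, d l := Finset.sum_nonneg fun l _ => (hd0 l).le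
  have hSDle : (∑ l ∈ L, d l) ≤ m * u * u := by
    have h1 : (∑ l ∈ L, d l) * s ≤ m := by
      calc (∑ l ∈ L, d l) * s = ∑ l ∈ L, d l * s := by rw [Finset.sum_mul]
        _ ≤ ∑ l ∈ L, ((P l).card : ℝ) := by
            apply Finset.sum_le_sum
            intro l hl
            calc d l * s ≤ 1 * s := mul_le_mul_of_nonneg_right (hd1 l) hs0.le
              _ = s := one_mul s
              _ ≤ ((P l).card : ℝ) := hcards l hl
        _ = m := hcardsum
    have e : (m - (∑ l ∈ L, d l)*s)*(u*u) = m*u*u - (∑ l ∈ L, d l)*(s*(u*u)) := by ring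
    rw [hsu, mul_one] at e
    nlinarith [mul_nonneg (by linarith : (0:ℝ) ≤ m - (∑ l ∈ L, d l)*s)
      (mul_nonneg hu0.le hu0.le)]
  -- set the two matrices
  set Amat := ((1 / 2 : ℝ) • (∑ u ∈ H, ∑ v ∈ H, (d u * d v) • edgeL u v) +
      ∑ l ∈ L, ∑ h ∈ H, (d l * d h) • edgeL l h) with hAmat
  set Bmat := ((1 / 2 : ℝ) • (∑ u ∈ H, ∑ v ∈ H, (d u * d v) • edgeL u v) +
      ∑ l ∈ L, (m / ((P l).card : ℝ)) • ∑ h ∈ P l, (d l * d h) • edgeL l h) with hBmat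
  -- symmetry
  have hsymA : Amat.IsSymm := by
    rw [hAmat]
    apply Matrix.IsSymm.add
    · exact isSymm_smul _ _ (isSymm_sum _ _ fun uu _ =>
        isSymm_sum _ _ fun vv _ => isSymm_smul _ _ (isSymm_edgeL uu vv))
    · exact isSymm_sum _ _ fun l _ =>
        isSymm_sum _ _ fun h _ => isSymm_smul _ _ (isSymm_edgeL l h)
  have hsymB : Bmat.IsSymm := by
    rw [hBmat]
    apply Matrix.IsSymm.add
    · exact isSymm_smul _ _ (isSymm_sum _ _ fun uu _ =>
        isSymm_sum _ _ fun vv _ => isSymm_smul _ _ (isSymm_edgeL uu vv))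
    · exact isSymm_sum _ _ fun l _ => isSymm_smul _ _
        (isSymm_sum _ _ fun h _ => isSymm_smul _ _ (isSymm_edgeL l h))
  -- the key pointwise bound
  have main : ∀ x : V → ℝ,
      (qf x) Amat ≤ Real.exp (4*u) * (qf x) Bmat ∧
      (qf x) Bmat ≤ Real.exp (4*u) * (qf x) Amat := by
    intro x
    set μ : ℝ := (∑ h ∈ H, x h) / m with hμdef
    set CH : ℝ := ∑ h ∈ H, (x h - μ)^2 with hCHdef
    set μP : V → ℝ := fun l => (∑ h ∈ P l, x h) / ((P l).card : ℝ) with hμPdef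
    have hμPl : ∀ l, μP l = (∑ h ∈ P l, x h) / ((P l).card : ℝ) := fun l => by rw [hμPdef]
    set T1 : ℝ := ∑ l ∈ L, d l * (x l - μ)^2 with hT1def
    set T2 : ℝ := ∑ l ∈ L, d l * (x l - μP l)^2 with hT2def
    set E : ℝ := ∑ l ∈ L, d l * (μ - μP l)^2 with hEdef
    set W : ℝ := ∑ l ∈ L, d l * ((m / ((P l).card:ℝ)) * ∑ h ∈ P l, (x h - μP l)^2) with hWdef
    have hCH0 : 0 ≤ CH := by
      rw [hCHdef]; exact Finset.sum_nonneg fun _ _ => sq_nonneg _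
    have hT10 : 0 ≤ T1 := by
      rw [hT1def]; exact Finset.sum_nonneg fun l _ => mul_nonneg (hd0 l).le (sq_nonneg _)
    have hT20 : 0 ≤ T2 := by
      rw [hT2def]; exact Finset.sum_nonneg fun l _ => mul_nonneg (hd0 l).le (sq_nonneg _)
    have hE0 : 0 ≤ E := by
      rw [hEdef]; exact Finset.sum_nonneg fun l _ => mul_nonneg (hd0 l).le (sq_nonneg _)
    have hW0 : 0 ≤ W := by
      rw [hWdef]
      apply Finset.sum_nonneg
      intro l hl
      exact mul_nonneg (hd0 l).le (mul_nonneg (div_nonneg hm0.le (htl l hl).le)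
        (Finset.sum_nonneg fun _ _ => sq_nonneg _))
    -- split lemma specialized to H
    have hsplitH : ∀ a : ℝ, ∑ h ∈ H, (a - x h)^2 = m*(a - μ)^2 + CH := by
      intro a
      have h := sum_sq_split H hHne x a
      rw [← hmdef] at h
      rw [← hμdef] at h
      rw [← hCHdef] at h
      exact h
    -- split lemma specialized to P l
    have hsplitP : ∀ l ∈ L, ∀ a : ℝ, ∑ h ∈ P l, (a - x h)^2
        = ((P l).card:ℝ)*(a - μP l)^2 + ∑ h ∈ P l, (x h - μP l)^2 := by
      intro l hl a
      have h := sum_sq_split (P l) (hPne l hl) x a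
      rw [← hμPl l] at h
      exact h
    -- quadratic form of the HH part
    have hqf1 : (qf x) (∑ uu ∈ H, ∑ vv ∈ H, (d uu * d vv) • edgeL uu vv) = 2*(m*CH) := by
      rw [map_sum]
      have hinner : ∀ uu ∈ H, (qf x) (∑ vv ∈ H, (d uu * d vv) • edgeL uu vv)
          = m*(x uu - μ)^2 + CH := by
        intro uu huu
        rw [map_sum]
        have h2 : ∀ vv ∈ H, (qf x) ((d uu * d vv) • edgeL uu vv) = (x uu - x vv)^2 := by
          intro vv hvv
          rw [_root_.map_smul, hdH uu huu, hdH vv hvv, qf_edgeL]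
          simp
        rw [Finset.sum_congr rfl h2, hsplitH (x uu)]
      rw [Finset.sum_congr rfl hinner, Finset.sum_add_distrib, Finset.sum_const,
        ← Finset.mul_sum, nsmul_eq_mul, ← hmdef, ← hCHdef]
      ring
    -- quadratic form of the LH part
    have hqf2 : (qf x) (∑ l ∈ L, ∑ h ∈ H, (d l * d h) • edgeL l h)
        = m*T1 + (∑ l ∈ L, d l)*CH := by
      rw [map_sum]
      have hinner : ∀ l ∈ L, (qf x) (∑ h ∈ H, (d l * d h) • edgeL l h)
          = d l * (m*(x l - μ)^2 + CH) := by
        intro l hl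
        rw [map_sum]
        have h2 : ∀ h ∈ H, (qf x) ((d l * d h) • edgeL l h) = d l * (x l - x h)^2 := by
          intro h hh
          rw [_root_.map_smul, hdH h hh, qf_edgeL]
          simp
        rw [Finset.sum_congr rfl h2, ← Finset.mul_sum, hsplitH (x l)]
      rw [Finset.sum_congr rfl hinner]
      have h3 : ∀ l ∈ L, d l * (m*(x l - μ)^2 + CH)
          = m*(d l*(x l - μ)^2) + (d l)*CH := fun l _ => by ring
      rw [Finset.sum_congr rfl h3, Finset.sum_add_distrib, ← Finset.mul_sum, ← Finset.sum_mul,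
        hT1def]
    -- quadratic form of the star part
    have hqf3 : (qf x) (∑ l ∈ L, (m / ((P l).card : ℝ)) • ∑ h ∈ P l, (d l * d h) • edgeL l h)
        = m*T2 + W := by
      rw [map_sum]
      have hinner : ∀ l ∈ L,
          (qf x) ((m / ((P l).card : ℝ)) • ∑ h ∈ P l, (d l * d h) • edgeL l h)
          = d l * (m*(x l - μP l)^2) + d l * ((m / ((P l).card:ℝ)) * ∑ h ∈ P l, (x h - μP l)^2) := by
        intro l hl
        rw [_root_.map_smul, map_sum]
        have h2 : ∀ h ∈ P l, (qf x) ((d l * d h) • edgeL l h) = d l * (x l - x h)^2 := by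
          intro h hh
          rw [_root_.map_smul, hdH h (hPH l hl hh), qf_edgeL]
          simp
        rw [Finset.sum_congr rfl h2, ← Finset.mul_sum, hsplitP l hl (x l)]
        have ht : ((P l).card : ℝ) ≠ 0 := (htl l hl).ne'
        have hc : (m / ((P l).card : ℝ)) * ((P l).card : ℝ) = m := div_mul_cancel₀ m ht
        simp only [smul_eq_mul]
        linear_combination (d l * (x l - μP l)^2) * hc
      rw [Finset.sum_congr rfl hinner, Finset.sum_add_distrib]
      have h4 : ∀ l ∈ L, d l * (m*(x l - μP l)^2) = m * (d l * (x l - μP l)^2) :=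
        fun l _ => by ring
      rw [Finset.sum_congr rfl h4, ← Finset.mul_sum, ← hT2def, ← hWdef]
    -- quadratic forms of A and B
    have hQAeq : (qf x) Amat = m*CH + m*T1 + (∑ l ∈ L, d l)*CH := by
      rw [hAmat, map_add, _root_.map_smul, hqf1, hqf2]
      simp only [smul_eq_mul]
      ring
    have hQBeq : (qf x) Bmat = m*CH + m*T2 + W := by
      rw [hBmat, map_add, _root_.map_smul, hqf1, hqf3]
      simp only [smul_eq_mul]
      ring
    -- bound on W
    have hWle : W ≤ m*u*u*CH := by
      have per : ∀ l ∈ L, d l * ((m / ((P l).card:ℝ)) * ∑ h ∈ P l, (x h - μP l)^2)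
          ≤ (m*(u*u)) * ∑ h ∈ P l, (x h - μ)^2 := by
        intro l hl
        have hV0 : (0:ℝ) ≤ ∑ h ∈ P l, (x h - μ)^2 := Finset.sum_nonneg fun _ _ => sq_nonneg _
        have hWl : ∑ h ∈ P l, (x h - μP l)^2 ≤ ∑ h ∈ P l, (x h - μ)^2 := by
          have h := var_le (P l) (hPne l hl) x μ
          rw [← hμPl l] at h
          exact h
        have hdiv : m / ((P l).card:ℝ) ≤ m*(u*u) := by
          rw [← hdivs m]
          exact div_le_div_of_nonneg_left hm0.le hs0 (hcards l hl)
        have hW0l : (0:ℝ) ≤ ∑ h ∈ P l, (x h - μP l)^2 :=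
          Finset.sum_nonneg fun _ _ => sq_nonneg _
        calc d l * ((m / ((P l).card:ℝ)) * ∑ h ∈ P l, (x h - μP l)^2)
            ≤ 1 * ((m / ((P l).card:ℝ)) * ∑ h ∈ P l, (x h - μP l)^2) := by
              apply mul_le_mul_of_nonneg_right (hd1 l)
              exact mul_nonneg (div_nonneg hm0.le (htl l hl).le) hW0l
          _ = (m / ((P l).card:ℝ)) * ∑ h ∈ P l, (x h - μP l)^2 := one_mul _
          _ ≤ (m / ((P l).card:ℝ)) * ∑ h ∈ P l, (x h - μ)^2 :=
              mul_le_mul_of_nonneg_left hWl (div_nonneg hm0.le (htl l hl).le)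
          _ ≤ (m*(u*u)) * ∑ h ∈ P l, (x h - μ)^2 :=
              mul_le_mul_of_nonneg_right hdiv hV0
      calc W ≤ ∑ l ∈ L, (m*(u*u)) * ∑ h ∈ P l, (x h - μ)^2 := by
            rw [hWdef]; exact Finset.sum_le_sum per
        _ = (m*(u*u)) * ∑ l ∈ L, ∑ h ∈ P l, (x h - μ)^2 := by rw [Finset.mul_sum]
        _ = (m*(u*u)) * CH := by rw [hpart (fun h => (x h - μ)^2), ← hCHdef]
        _ = m*u*u*CH := by ring
    -- bound on E
    have hEle : E ≤ CH*u*u := by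
      have per : ∀ l ∈ L, d l * (μ - μP l)^2 ≤ (u*u) * ∑ h ∈ P l, (x h - μ)^2 := by
        intro l hl
        have hV0 : (0:ℝ) ≤ ∑ h ∈ P l, (x h - μ)^2 := Finset.sum_nonneg fun _ _ => sq_nonneg _
        have hms := mean_sq_le (P l) (hPne l hl) x μ
        rw [← hμPl l] at hms
        -- (P l).card * (μP l - μ)^2 ≤ ∑ (x h - μ)^2
        have h1 : (μ - μP l)^2 ≤ (∑ h ∈ P l, (x h - μ)^2) / ((P l).card:ℝ) := by
          rw [le_div_iff₀ (htl l hl)]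
          calc (μ - μP l)^2 * ((P l).card:ℝ) = ((P l).card:ℝ) * (μP l - μ)^2 := by ring
            _ ≤ ∑ h ∈ P l, (x h - μ)^2 := hms
        have h2 : (∑ h ∈ P l, (x h - μ)^2) / ((P l).card:ℝ)
            ≤ (∑ h ∈ P l, (x h - μ)^2) * (u*u) := by
          rw [← hdivs]
          exact div_le_div_of_nonneg_left hV0 hs0 (hcards l hl)
        calc d l * (μ - μP l)^2 ≤ 1 * (μ - μP l)^2 :=
              mul_le_mul_of_nonneg_right (hd1 l) (sq_nonneg _)
          _ = (μ - μP l)^2 := one_mul _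
          _ ≤ (∑ h ∈ P l, (x h - μ)^2) * (u*u) := le_trans h1 h2
          _ = (u*u) * ∑ h ∈ P l, (x h - μ)^2 := by ring
      calc E ≤ ∑ l ∈ L, (u*u) * ∑ h ∈ P l, (x h - μ)^2 := by
            rw [hEdef]; exact Finset.sum_le_sum per
        _ = (u*u) * ∑ l ∈ L, ∑ h ∈ P l, (x h - μ)^2 := by rw [Finset.mul_sum]
        _ = (u*u) * CH := by rw [hpart (fun h => (x h - μ)^2), ← hCHdef]
        _ = CH*u*u := by ring
    -- the two triangle-type bounds
    have h1r : 1/u = r := by rw [hudef]; field_simp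
    have hT2le : T2 ≤ (1+u)*T1 + (1+r)*E := by
      have per : ∀ l ∈ L, d l*(x l - μP l)^2
          ≤ (1+u)*(d l*(x l - μ)^2) + (1+r)*(d l*(μ - μP l)^2) := by
        intro l hl
        have h := sq_add_le u hu0 (x l - μ) (μ - μP l)
        rw [h1r] at h
        have he : x l - μP l = (x l - μ) + (μ - μP l) := by ring
        calc d l*(x l - μP l)^2 = d l*((x l - μ) + (μ - μP l))^2 := by rw [he]
          _ ≤ d l * ((1+u)*(x l - μ)^2 + (1+r)*(μ - μP l)^2) :=
              mul_le_mul_of_nonneg_left h (hd0 l).le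
          _ = (1+u)*(d l*(x l - μ)^2) + (1+r)*(d l*(μ - μP l)^2) := by ring
      calc T2 ≤ ∑ l ∈ L, ((1+u)*(d l*(x l - μ)^2) + (1+r)*(d l*(μ - μP l)^2)) := by
            rw [hT2def]; exact Finset.sum_le_sum per
        _ = (1+u)*T1 + (1+r)*E := by
            rw [Finset.sum_add_distrib, ← Finset.mul_sum, ← Finset.mul_sum, hT1def, hEdef]
    have hT1le : T1 ≤ (1+u)*T2 + (1+r)*E := by
      have per : ∀ l ∈ L, d l*(x l - μ)^2
          ≤ (1+u)*(d l*(x l - μP l)^2) + (1+r)*(d l*(μ - μP l)^2) := by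
        intro l hl
        have h := sq_add_le u hu0 (x l - μP l) (μP l - μ)
        rw [h1r] at h
        have he : x l - μ = (x l - μP l) + (μP l - μ) := by ring
        calc d l*(x l - μ)^2 = d l*((x l - μP l) + (μP l - μ))^2 := by rw [he]
          _ ≤ d l * ((1+u)*(x l - μP l)^2 + (1+r)*(μP l - μ)^2) :=
              mul_le_mul_of_nonneg_left h (hd0 l).le
          _ = (1+u)*(d l*(x l - μP l)^2) + (1+r)*(d l*(μ - μP l)^2) := by ring
      calc T1 ≤ ∑ l ∈ L, ((1+u)*(d l*(x l - μP l)^2) + (1+r)*(d l*(μ - μP l)^2)) := by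
            rw [hT1def]; exact Finset.sum_le_sum per
        _ = (1+u)*T2 + (1+r)*E := by
            rw [Finset.sum_add_distrib, ← Finset.mul_sum, ← Finset.mul_sum, hT2def, hEdef]
    exact core_ineq m r u CH T1 T2 E W (∑ l ∈ L, d l) ((qf x) Amat) ((qf x) Bmat)
      hm0.le hr1 hu0 hru hCH0 hT10 hT20 hE0 hW0 hSD0 hQAeq hQBeq hSDle hWle hEle hT2le hT1le
  -- conclude
  have hgoalA : (4 : ℝ) / Real.sqrt s = 4 * u := by rw [← hrdef]; exact hε
  constructor
  · -- PSDLE Amat (exp ε • Bmat)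
    apply posSemidef_of_symm
    · exact Matrix.IsSymm.sub (isSymm_smul _ _ hsymB) hsymA
    · intro x
      have hcalc : x ⬝ᵥ (Real.exp (4 / Real.sqrt s) • Bmat - Amat) *ᵥ x
          = Real.exp (4 / Real.sqrt s) * ((qf x) Bmat) - (qf x) Amat := by
        have : x ⬝ᵥ (Real.exp (4 / Real.sqrt s) • Bmat - Amat) *ᵥ x
            = (qf x) (Real.exp (4 / Real.sqrt s) • Bmat - Amat) := rfl
        rw [this, map_sub, _root_.map_smul, smul_eq_mul]
      rw [hcalc, hgoalA]
      linarith [(main x).1]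
  · -- PSDLE (exp (-ε) • Bmat) Amat
    apply posSemidef_of_symm
    · exact Matrix.IsSymm.sub hsymA (isSymm_smul _ _ hsymB)
    · intro x
      have hcalc : x ⬝ᵥ (Amat - Real.exp (-(4 / Real.sqrt s)) • Bmat) *ᵥ x
          = (qf x) Amat - Real.exp (-(4 / Real.sqrt s)) * ((qf x) Bmat) := by
        have : x ⬝ᵥ (Amat - Real.exp (-(4 / Real.sqrt s)) • Bmat) *ᵥ x
            = (qf x) (Amat - Real.exp (-(4 / Real.sqrt s)) • Bmat) := rfl
        rw [this, map_sub, _root_.map_smul, smul_eq_mul]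
      rw [hcalc, hgoalA]
      have h2 := (main x).2
      have hpos : (0:ℝ) < Real.exp (-(4*u)) := Real.exp_pos _
      have := mul_le_mul_of_nonneg_left h2 hpos.le
      rw [← mul_assoc, ← Real.exp_add] at this
      simp only [neg_add_cancel, Real.exp_zero, one_mul] at this
      linarith
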